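/- arXiv:1608.04158 — 9 statements merged into one kernel-verified Lean document; each statement's English description precedes it below -/
import Mathlib

section
/- For n ≥ 5 and a ∈ Z_n with a ∉ {1,-1} and a² ≡ ±1 (mod n), the map x ↦ a·x is a graph automorphism of the circulant graph C_n(1,a) that maps the edge {0,1} to an edge of the jumpset of a. -/
/-- The circulant graph `C_n(1,a)` on `ZMod n`: `i ~ j` iff `j - i ∈ {±1, ±a}`. -/
def circGraph (n : ℕ) (a : ZMod n) : SimpleGraph (ZMod n) :=
  SimpleGraph.fromRel (fun i j => j = i + 1 ∨ j = i + a)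

/-- For `n ≥ 5` and `a ∉ {1,-1}` with `a² ≡ ±1 (mod n)`, multiplication by `a` is an
automorphism of `C_n(1,a)` mapping the edge `{0,1}` into the jumpset of `a`. -/
theorem circ_mul_automorphism (n : ℕ) (hn : 5 ≤ n) (a : ZMod n)
    (ha1 : a ≠ 1) (ha2 : a ≠ -1) (hsq : a ^ 2 = 1 ∨ a ^ 2 = -1) :
    ∃ g : circGraph n a ≃g circGraph n a,
      (∀ x : ZMod n, g x = a * x) ∧
      ∃ j : ZMod n, Sym2.map g s((0 : ZMod n), (1 : ZMod n)) = s(j, j + a) := by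
  haveI : Fact (1 < n) := ⟨by omega⟩
  obtain ⟨b, hab, hba⟩ : ∃ b : ZMod n, a * b = 1 ∧ b * a = 1 := by
    rcases hsq with h | h
    · exact ⟨a, by linear_combination h, by linear_combination h⟩
    · exact ⟨-a, by linear_combination -h, by linear_combination -h⟩
  have hinj : Function.Injective (fun x : ZMod n => a * x) := fun x y hxy => by
    have := congrArg (b * ·) hxy
    simpa [← mul_assoc, hba] using this
  have key : ∀ x y : ZMod n,
      ((a * y = a * x + 1 ∨ a * y = a * x + a) ∨ (a * x = a * y + 1 ∨ a * x = a * y + a)) ↔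
      ((y = x + 1 ∨ y = x + a) ∨ (x = y + 1 ∨ x = y + a)) := by
    intro x y
    have e1 : ∀ u v : ZMod n, a * u = a * v + a ↔ u = v + 1 := by
      intro u v
      constructor
      · intro h1; exact hinj (show a * u = a * (v + 1) by linear_combination h1)
      · rintro rfl; ring
    rcases hsq with h | h
    · have e2 : ∀ u v : ZMod n, a * u = a * v + 1 ↔ u = v + a := by
        intro u v
        constructor
        · intro h1; exact hinj (show a * u = a * (v + a) by linear_combination h1 - h)
        · rintro rfl; linear_combination h
      rw [e1, e1, e2, e2]; tauto
    · have e2 : ∀ u v : ZMod n, a * u = a * v + 1 ↔ v = u + a := by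
        intro u v
        constructor
        · intro h1
          have := hinj (show a * u = a * (v + -a) by linear_combination h1 + h)
          linear_combination -this
        · rintro rfl; linear_combination -h
      rw [e1, e1, e2, e2]; tauto
  let e : ZMod n ≃ ZMod n :=
    { toFun := fun x => a * x
      invFun := fun x => b * x
      left_inv := fun x => by simp [← mul_assoc, hba]
      right_inv := fun x => by simp [← mul_assoc, hab] }
  have hmap : ∀ x y : ZMod n, (circGraph n a).Adj (a * x) (a * y) ↔ (circGraph n a).Adj x y := by
    intro x y
    simp only [circGraph, SimpleGraph.fromRel_adj, ne_eq]
    rw [key x y]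
    constructor
    · rintro ⟨h1, h2⟩; exact ⟨fun hh => h1 (congrArg (a * ·) hh), h2⟩
    · rintro ⟨h1, h2⟩; exact ⟨fun hh => h1 (hinj hh), h2⟩
  refine ⟨⟨e, fun {x y} => hmap x y⟩, fun x => rfl, 0, ?_⟩
  show s(a * 0, a * 1) = s((0 : ZMod n), 0 + a)
  simp
end

section
/- For n ≥ 5 and a ∈ Z_n with a ∉ {0,1,-1} and a² ≡ ±1 (mod n), the circulant graph C_n(1,a) is dart-transitive (arc-transitive). -/
namespace CircAux

/-- The connection set predicate. -/
def P {n : ℕ} (a d : ZMod n) : Prop := d = 1 ∨ d = -1 ∨ d = a ∨ d = -a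

lemma adj_iff {n : ℕ} {a : ZMod n} (u v : ZMod n) :
    (circGraph n a).Adj u v ↔ u ≠ v ∧ P a (v - u) := by
  unfold circGraph P
  rw [SimpleGraph.fromRel_adj]
  constructor
  · rintro ⟨h, (h2 | h2) | (h2 | h2)⟩ <;> refine ⟨h, ?_⟩
    · exact Or.inl (by linear_combination h2)
    · exact Or.inr (Or.inr (Or.inl (by linear_combination h2)))
    · exact Or.inr (Or.inl (by linear_combination -h2))
    · exact Or.inr (Or.inr (Or.inr (by linear_combination -h2)))
  · rintro ⟨h, h2 | h2 | h2 | h2⟩ <;> refine ⟨h, ?_⟩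
    · exact Or.inl (Or.inl (by linear_combination h2))
    · exact Or.inr (Or.inl (by linear_combination -h2))
    · exact Or.inl (Or.inr (by linear_combination h2))
    · exact Or.inr (Or.inr (by linear_combination -h2))

lemma mulS {n : ℕ} {a : ZMod n} (hsq : a ^ 2 = 1 ∨ a ^ 2 = -1)
    (x y : ZMod n) (hx : P a x) (hy : P a y) : P a (x * y) := by
  unfold P at *
  rcases hx with rfl | rfl | rfl | rfl <;> rcases hy with rfl | rfl | rfl | rfl <;>
    rcases hsq with h | h <;>
    first
      | exact Or.inl (by linear_combination)
      | exact Or.inl (by linear_combination h)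
      | exact Or.inl (by linear_combination -h)
      | exact Or.inr (Or.inl (by linear_combination))
      | exact Or.inr (Or.inl (by linear_combination h))
      | exact Or.inr (Or.inl (by linear_combination -h))
      | exact Or.inr (Or.inr (Or.inl (by linear_combination)))
      | exact Or.inr (Or.inr (Or.inl (by linear_combination h)))
      | exact Or.inr (Or.inr (Or.inl (by linear_combination -h)))
      | exact Or.inr (Or.inr (Or.inr (by linear_combination)))
      | exact Or.inr (Or.inr (Or.inr (by linear_combination h)))
      | exact Or.inr (Or.inr (Or.inr (by linear_combination -h)))

lemma invS {n : ℕ} {a : ZMod n} (hsq : a ^ 2 = 1 ∨ a ^ 2 = -1)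
    (d : ZMod n) (hd : P a d) : ∃ d', P a d' ∧ d * d' = 1 := by
  rcases hd with h1 | h1 | h1 | h1
  · exact ⟨1, Or.inl rfl, by rw [h1]; ring⟩
  · exact ⟨-1, Or.inr (Or.inl rfl), by rw [h1]; ring⟩
  · rcases hsq with h | h
    · exact ⟨a, Or.inr (Or.inr (Or.inl rfl)), by linear_combination a * h1 + h⟩
    · exact ⟨-a, Or.inr (Or.inr (Or.inr rfl)), by linear_combination (-a) * h1 - h⟩
  · rcases hsq with h | h
    · exact ⟨-a, Or.inr (Or.inr (Or.inr rfl)), by linear_combination (-a) * h1 + h⟩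
    · exact ⟨a, Or.inr (Or.inr (Or.inl rfl)), by linear_combination a * h1 - h⟩

/-- Affine automorphism of the circulant graph. -/
def affIso {n : ℕ} {a : ZMod n} (c c' t : ZMod n) (hcc : c * c' = 1)
    (hc : ∀ d, P a d → P a (c * d)) (hc' : ∀ d, P a d → P a (c' * d)) :
    circGraph n a ≃g circGraph n a where
  toEquiv := ⟨fun z => c * z + t, fun z => c' * (z - t),
    fun z => by simp only; linear_combination z * hcc,
    fun z => by simp only; linear_combination (z - t) * hcc⟩
  map_rel_iff' := by
    intro u v
    simp only [Equiv.coe_fn_mk]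
    rw [adj_iff, adj_iff]
    constructor
    · rintro ⟨h1, h2⟩
      refine ⟨fun heq => h1 (by rw [heq]), ?_⟩
      have e : (c * v + t) - (c * u + t) = c * (v - u) := by ring
      rw [e] at h2
      have h3 := hc' _ h2
      have e2 : c' * (c * (v - u)) = v - u := by linear_combination (v - u) * hcc
      rwa [e2] at h3
    · rintro ⟨h1, h2⟩
      refine ⟨?_, ?_⟩
      · intro heq
        exact h1 (by linear_combination c' * heq - (u - v) * hcc)
      · have h3 := hc _ h2
        have e : c * (v - u) = (c * v + t) - (c * u + t) := by ring
        rwa [e] at h3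

end CircAux

/-- For `n ≥ 5` and `a ∉ {0,1,-1}` with `a² ≡ ±1 (mod n)`, the circulant `C_n(1,a)`
is dart-transitive. -/
theorem circ_dartTransitive (n : ℕ) (hn : 5 ≤ n) (a : ZMod n)
    (ha0 : a ≠ 0) (ha1 : a ≠ 1) (ha2 : a ≠ -1) (hsq : a ^ 2 = 1 ∨ a ^ 2 = -1) :
    ∀ u v x y : ZMod n, (circGraph n a).Adj u v → (circGraph n a).Adj x y →
      ∃ g : circGraph n a ≃g circGraph n a, g u = x ∧ g v = y := by
  intro u v x y huv hxy
  rw [CircAux.adj_iff] at huv hxy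
  obtain ⟨hne, hd⟩ := huv
  obtain ⟨hne', he⟩ := hxy
  obtain ⟨d', hd', hdd'⟩ := CircAux.invS hsq _ hd
  obtain ⟨e', he', hee'⟩ := CircAux.invS hsq _ he
  have hcc : ((y - x) * d') * ((v - u) * e') = 1 := by
    linear_combination ((y - x) * e') * hdd' + hee'
  have hPc : CircAux.P a ((y - x) * d') := CircAux.mulS hsq _ _ he hd'
  have hPc' : CircAux.P a ((v - u) * e') := CircAux.mulS hsq _ _ hd he'
  refine ⟨CircAux.affIso ((y - x) * d') ((v - u) * e') (x - (y - x) * d' * u) hcc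
    (fun s hs => CircAux.mulS hsq _ _ hPc hs)
    (fun s hs => CircAux.mulS hsq _ _ hPc' hs), ?_, ?_⟩
  · show (y - x) * d' * u + (x - (y - x) * d' * u) = x
    ring
  · show (y - x) * d' * v + (x - (y - x) * d' * u) = y
    linear_combination (y - x) * hdd'
end

section
/- Every edge-transitive circulant graph C_n(a,b) of valence 4 is also dart-transitive. -/
/-- The circulant graph `C_n(a,b)` on `ZMod n`: `i ~ j` iff `j - i ∈ {±a, ±b}`. -/
def circGraph2 (n : ℕ) (a b : ZMod n) : SimpleGraph (ZMod n) :=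
  SimpleGraph.fromRel (fun i j => j = i + a ∨ j = i + b)

/-- The map `i ↦ c - i` is an automorphism of the circulant graph. -/
def circFlipAut (n : ℕ) (a b c : ZMod n) : circGraph2 n a b ≃g circGraph2 n a b :=
  { toEquiv := ⟨fun i => c - i, fun i => c - i,
      fun i => sub_sub_cancel c i, fun i => sub_sub_cancel c i⟩
    map_rel_iff' := by
      intro i j
      simp only [circGraph2, SimpleGraph.fromRel_adj, Equiv.coe_fn_mk, ne_eq]
      constructor
      · rintro ⟨hne, h⟩
        refine ⟨fun hij => hne (by rw [hij]), ?_⟩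
        rcases h with (h | h) | (h | h)
        · exact Or.inr (Or.inl (by linear_combination h))
        · exact Or.inr (Or.inr (by linear_combination h))
        · exact Or.inl (Or.inl (by linear_combination h))
        · exact Or.inl (Or.inr (by linear_combination h))
      · rintro ⟨hne, h⟩
        refine ⟨fun hij => hne (by linear_combination -hij), ?_⟩
        rcases h with (h | h) | (h | h)
        · exact Or.inr (Or.inl (by linear_combination h))
        · exact Or.inr (Or.inr (by linear_combination h))
        · exact Or.inl (Or.inl (by linear_combination h))
        · exact Or.inl (Or.inr (by linear_combination h)) }

/-- Every edge-transitive tetravalent circulant `C_n(a,b)` is dart-transitive. -/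
theorem circ_edgeTransitive_implies_dartTransitive (n : ℕ) (a b : ZMod n)
    (ha0 : a ≠ 0) (hb0 : b ≠ 0) (hab : a ≠ b) (hab' : a ≠ -b)
    (ha2 : a + a ≠ 0) (hb2 : b + b ≠ 0)
    (hET : ∀ e ∈ (circGraph2 n a b).edgeSet, ∀ f ∈ (circGraph2 n a b).edgeSet,
      ∃ g : circGraph2 n a b ≃g circGraph2 n a b, Sym2.map g e = f) :
    ∀ u v x y : ZMod n, (circGraph2 n a b).Adj u v → (circGraph2 n a b).Adj x y →
      ∃ g : circGraph2 n a b ≃g circGraph2 n a b, g u = x ∧ g v = y := by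
  intro u v x y huv hxy
  obtain ⟨g, hg⟩ := hET s(u, v) ((circGraph2 n a b).mem_edgeSet.mpr huv)
    s(x, y) ((circGraph2 n a b).mem_edgeSet.mpr hxy)
  rw [Sym2.map_pair_eq, Sym2.eq_iff] at hg
  rcases hg with ⟨h1, h2⟩ | ⟨h1, h2⟩
  · exact ⟨g, h1, h2⟩
  · refine ⟨g.trans (circFlipAut n a b (x + y)), ?_, ?_⟩
    · show (x + y) - g u = x
      rw [h1]; ring
    · show (x + y) - g v = y
      rw [h2]; ring
end

section
/- For m ≥ 3, the circulant graph C_{2m}(1, m+1) is isomorphic to the wreath graph W(m,2). -/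
/-- The wreath graph W(n,2) on vertex set `ZMod n × ZMod 2`. -/
def wreathGraph (n : ℕ) : SimpleGraph (ZMod n × ZMod 2) :=
  SimpleGraph.fromRel (fun u v => v.1 = u.1 + 1)

lemma pi_ker (m : ℕ) (hm : 3 ≤ m) (x : ZMod (2*m)) :
    (ZMod.castHom (dvd_mul_left m 2) (ZMod m)) x = 0 ↔ x = 0 ∨ x = (m : ZMod (2*m)) := by
  haveI : NeZero m := ⟨by omega⟩
  haveI : NeZero (2*m) := ⟨by omega⟩
  have hx : ((ZMod.castHom (dvd_mul_left m 2) (ZMod m)) x) = ((x.val : ℕ) : ZMod m) := by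
    rw [ZMod.castHom_apply, ← ZMod.natCast_val]
  have hx2 : ((x.val : ℕ) : ZMod (2*m)) = x := by
    rw [ZMod.natCast_val, ZMod.cast_id]
  constructor
  · intro h
    rw [hx, ZMod.natCast_eq_zero_iff] at h
    have hlt : x.val < 2*m := x.val_lt
    obtain ⟨k, hk⟩ := h
    have hk2 : k < 2 := by nlinarith
    interval_cases k
    · left; rw [← hx2, hk]; simp
    · right; rw [← hx2, hk, mul_one]
  · rintro (rfl | rfl)
    · simp
    · simp

/-- For `m ≥ 3`, the circulant `C_{2m}(1, m+1)` is isomorphic to `W(m,2)`. -/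
theorem circ_iso_wreath (m : ℕ) (hm : 3 ≤ m) :
    Nonempty (circGraph (2 * m) ((m : ZMod (2 * m)) + 1) ≃g wreathGraph m) := by
  haveI : NeZero m := ⟨by omega⟩
  haveI : NeZero (2*m) := ⟨by omega⟩
  set π := ZMod.castHom (dvd_mul_left m 2) (ZMod m) with hπ
  have key : ∀ i j : ZMod (2*m), π j = π i + 1 ↔ (j = i + 1 ∨ j = i + ((m : ZMod (2*m)) + 1)) := by
    intro i j
    have hπm : π (m : ZMod (2*m)) = 0 := by simp [hπ]
    constructor
    · intro h
      have h0 : π (j - i - 1) = 0 := by rw [map_sub, map_sub, map_one, h]; ring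
      rcases (pi_ker m hm _).1 h0 with h1 | h1
      · left; linear_combination h1
      · right; linear_combination h1
    · rintro (rfl | rfl)
      · simp
      · rw [map_add, map_add, hπm, map_one]; ring
  let φ : ZMod (2*m) → ZMod m × ZMod 2 := fun i => (π i, if i.val < m then 0 else 1)
  have hfst : ∀ i, (φ i).1 = π i := fun i => rfl
  have hinj : Function.Injective φ := by
    intro i j h
    have h1 : π i = π j := congrArg Prod.fst h
    have h2 : (if i.val < m then (0:ZMod 2) else 1) = (if j.val < m then 0 else 1) :=
      congrArg Prod.snd h
    have hval : (i.val : ZMod m) = (j.val : ZMod m) := by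
      simpa only [ZMod.natCast_val, ZMod.castHom_apply, hπ] using h1
    have hmod : i.val % m = j.val % m := (ZMod.natCast_eq_natCast_iff _ _ _).1 hval
    have hi := i.val_lt
    have hj := j.val_lt
    have : i.val = j.val := by
      by_cases hc : i.val < m
      · have hc' : j.val < m := by
          by_contra hc'; simp [hc, hc'] at h2
        rwa [Nat.mod_eq_of_lt hc, Nat.mod_eq_of_lt hc'] at hmod
      · have hc' : ¬ j.val < m := by
          by_contra hc'; simp [hc, hc'] at h2
        have e1 : i.val % m = i.val - m := by
          rw [Nat.mod_eq_sub_mod (le_of_not_gt hc), Nat.mod_eq_of_lt (by omega)]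
        have e2 : j.val % m = j.val - m := by
          rw [Nat.mod_eq_sub_mod (le_of_not_gt hc'), Nat.mod_eq_of_lt (by omega)]
        omega
    exact ZMod.val_injective _ this
  have hbij : Function.Bijective φ := by
    rw [Fintype.bijective_iff_injective_and_card]
    refine ⟨hinj, ?_⟩
    simp [ZMod.card]; ring
  refine ⟨⟨Equiv.ofBijective φ hbij, ?_⟩⟩
  intro i j
  simp only [Equiv.ofBijective_apply, wreathGraph, circGraph, SimpleGraph.fromRel_adj,
    hfst, Ne, hinj.eq_iff]
  have k1 := key i j
  have k2 := key j i
  tauto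
end

section
/- Every half-arc-transitive graph (vertex- and edge-transitive but not dart-transitive) has even valence. -/
/-- Every half-arc-transitive graph (vertex- and edge-transitive, but not
dart-transitive) of valence `d` has `d` even. -/
theorem halfArcTransitive_even_valence {V : Type*} [Fintype V] (G : SimpleGraph V) (d : ℕ)
    (hreg : ∀ v : V, (G.neighborSet v).ncard = d)
    (hVT : ∀ u v : V, ∃ g : G ≃g G, g u = v)
    (hET : ∀ e ∈ G.edgeSet, ∀ f ∈ G.edgeSet, ∃ g : G ≃g G, Sym2.map g e = f)
    (hnDT : ¬ (∀ u v x y : V, G.Adj u v → G.Adj x y → ∃ g : G ≃g G, g u = x ∧ g v = y)) :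
    Even d := by
  classical
  push_neg at hnDT
  obtain ⟨u₀, v₀, a₀, b₀, huv, hab, hno⟩ := hnDT
  -- the orbit relation on darts
  set R : V × V → V × V → Prop := fun p q => ∃ g : G ≃g G, g p.1 = q.1 ∧ g p.2 = q.2 with hRdef
  have Rsymm : ∀ {p q}, R p q → R q p := by
    rintro p q ⟨g, h1, h2⟩
    exact ⟨g.symm, by simp [← h1], by simp [← h2]⟩
  have Rtrans : ∀ {p q r}, R p q → R q r → R p r := by
    rintro p q r ⟨g, h1, h2⟩ ⟨g', h1', h2'⟩
    exact ⟨g.trans g', by simp [h1, h1'], by simp [h2, h2']⟩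
  have Rswap : ∀ {p q}, R p q → R p.swap q.swap := by
    rintro p q ⟨g, h1, h2⟩
    exact ⟨g, h2, h1⟩
  have RAdj : ∀ {p : V × V}, R p (a₀, b₀) → G.Adj p.1 p.2 := by
    rintro p ⟨g, h1, h2⟩
    have : G.Adj (g p.1) (g p.2) := by rw [h1, h2]; exact hab
    exact g.map_adj_iff.mp this
  -- every dart, in one direction or the other, lies in the orbit of (a₀, b₀)
  have claim1 : ∀ x y : V, G.Adj x y → R (x, y) (a₀, b₀) ∨ R (y, x) (a₀, b₀) := by
    intro x y hxy
    obtain ⟨g, hg⟩ := hET s(x, y) hxy s(a₀, b₀) hab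
    rw [Sym2.map_pair_eq, Sym2.eq_iff] at hg
    rcases hg with ⟨h1, h2⟩ | ⟨h1, h2⟩
    · exact Or.inl ⟨g, h1, h2⟩
    · exact Or.inr ⟨g, h2, h1⟩
  -- but not in both directions
  have hdisj : ∀ v w : V, ¬ (R (v, w) (a₀, b₀) ∧ R (w, v) (a₀, b₀)) := by
    rintro v w ⟨h1, h2⟩
    have hswap : R (a₀, b₀) (b₀, a₀) := Rtrans (Rsymm h1) (Rswap (p := (w, v)) h2)
    have hone : ∀ x y : V, G.Adj x y → R (x, y) (a₀, b₀) := by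
      intro x y hxy
      rcases claim1 x y hxy with h | h
      · exact h
      · exact Rtrans (Rswap (p := (y, x)) h) (Rsymm hswap)
    have h3 : R (u₀, v₀) (a₀, b₀) := hone _ _ huv
    obtain ⟨g, hg1, hg2⟩ := h3
    exact hno g hg1 hg2
  -- out- and in-neighbor sets
  set A : V → Finset V := fun v => Finset.univ.filter (fun w => R (v, w) (a₀, b₀)) with hAdef
  set B : V → Finset V := fun v => Finset.univ.filter (fun w => R (w, v) (a₀, b₀)) with hBdef
  have hmemA : ∀ v w, w ∈ A v ↔ R (v, w) (a₀, b₀) := by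
    intro v w; simp [hAdef]
  have hmemB : ∀ v w, w ∈ B v ↔ R (w, v) (a₀, b₀) := by
    intro v w; simp [hBdef]
  -- each vertex's neighbors split into A and B
  have hAB : ∀ v, (A v).card + (B v).card = d := by
    intro v
    have hu : G.neighborFinset v = A v ∪ B v := by
      ext w
      simp only [SimpleGraph.mem_neighborFinset, Finset.mem_union, hmemA, hmemB]
      constructor
      · intro h; exact claim1 v w h
      · rintro (h | h)
        · exact RAdj h
        · exact (RAdj h).symm
    have hd : Disjoint (A v) (B v) := by
      rw [Finset.disjoint_left]
      intro w hw hw'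
      exact hdisj v w ⟨(hmemA v w).mp hw, (hmemB v w).mp hw'⟩
    have hcard : (G.neighborFinset v).card = d := by
      rw [← hreg v, SimpleGraph.neighborFinset_def]
      exact (Set.ncard_eq_toFinset_card' _).symm
    rw [hu, Finset.card_union_of_disjoint hd] at hcard
    exact hcard
  -- A has constant cardinality by vertex-transitivity
  have hAconst : ∀ v, (A v).card = (A u₀).card := by
    intro v
    obtain ⟨g, hg⟩ := hVT u₀ v
    refine Finset.card_bij' (fun w _ => g.symm w) (fun w _ => g w) ?_ ?_ ?_ ?_
    · intro w hw
      rw [hmemA] at hw ⊢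
      refine Rtrans ⟨g, ?_, ?_⟩ hw
      · simpa using hg
      · simp
    · intro w hw
      rw [hmemA] at hw ⊢
      refine Rtrans ⟨g.symm, ?_, ?_⟩ hw
      · rw [← hg]; simp
      · simp
    · intro w _; simp
    · intro w _; simp
  -- double counting the darts in the orbit
  set O : Finset (V × V) := Finset.univ.filter (fun p => R p (a₀, b₀)) with hOdef
  have h1 : O.card = ∑ v, (A v).card := by
    rw [Finset.card_eq_sum_card_fiberwise (f := Prod.fst) (t := Finset.univ)
      (fun p _ => Finset.mem_univ _)]
    refine Finset.sum_congr rfl fun v _ => ?_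
    refine Finset.card_bij' (fun p _ => p.2) (fun w _ => (v, w)) ?_ ?_ ?_ ?_
    · rintro ⟨x, y⟩ hp
      simp only [Finset.mem_filter, hOdef] at hp
      obtain ⟨⟨_, hR⟩, hfst⟩ := hp
      rw [hmemA]
      simpa [← hfst] using hR
    · intro w hw
      rw [hmemA] at hw
      simp [hOdef, hw]
    · rintro ⟨x, y⟩ hp
      simp only [Finset.mem_filter, hOdef] at hp
      simp [hp.2]
    · intro w _; rfl
  have h2 : O.card = ∑ v, (B v).card := by
    rw [Finset.card_eq_sum_card_fiberwise (f := Prod.snd) (t := Finset.univ)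
      (fun p _ => Finset.mem_univ _)]
    refine Finset.sum_congr rfl fun v _ => ?_
    refine Finset.card_bij' (fun p _ => p.1) (fun w _ => (w, v)) ?_ ?_ ?_ ?_
    · rintro ⟨x, y⟩ hp
      simp only [Finset.mem_filter, hOdef] at hp
      obtain ⟨⟨_, hR⟩, hsnd⟩ := hp
      rw [hmemB]
      simpa [← hsnd] using hR
    · intro w hw
      rw [hmemB] at hw
      simp [hOdef, hw]
    · rintro ⟨x, y⟩ hp
      simp only [Finset.mem_filter, hOdef] at hp
      simp [hp.2]
    · intro w _; rfl
  -- finish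
  set a := (A u₀).card with hadef
  have hsumA : ∑ v : V, (A v).card = Fintype.card V * a := by
    rw [Finset.sum_congr rfl (fun v _ => hAconst v), Finset.sum_const, smul_eq_mul,
      Finset.card_univ]
  have hsumB : ∑ v : V, (B v).card = Fintype.card V * a := by
    rw [← h2, h1, hsumA]
  have htotal : Fintype.card V * a + Fintype.card V * a = Fintype.card V * d := by
    have h3 : (∑ v : V, (A v).card) + (∑ v : V, (B v).card) = ∑ v : V, d := by
      rw [← Finset.sum_add_distrib]
      exact Finset.sum_congr rfl fun v _ => hAB v
    rw [hsumA, hsumB, Finset.sum_const, smul_eq_mul, Finset.card_univ] at h3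
    exact h3
  have hn : 0 < Fintype.card V := Fintype.card_pos_iff.mpr ⟨u₀⟩
  have : a + a = d := by
    have := htotal
    rw [← Nat.mul_add] at this
    exact Nat.eq_of_mul_eq_mul_left hn this
  exact ⟨a, this.symm⟩
end

section
/- A graph whose automorphism group acts transitively on edges but not on vertices is bipartite, with each edge having one endpoint in each part. -/
/-- A graph whose automorphism group is transitive on edges but not on vertices is
bipartite, with each edge having one endpoint in each part. -/
theorem edgeTransitive_not_vertexTransitive_bipartite {V : Type*} [Fintype V]
    (G : SimpleGraph V)
    (hiso : ∀ v : V, ∃ u : V, G.Adj v u)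
    (hET : ∀ e ∈ G.edgeSet, ∀ f ∈ G.edgeSet, ∃ g : G ≃g G, Sym2.map g e = f)
    (hnVT : ¬ (∀ u v : V, ∃ g : G ≃g G, g u = v)) :
    ∃ s : Set V, ∀ u v : V, G.Adj u v → (u ∈ s ↔ v ∉ s) := by
  cases isEmpty_or_nonempty V with
  | inl h => exact absurd (fun u _ => isEmptyElim u) hnVT
  | inr h =>
  obtain ⟨a, b, hab⟩ : ∃ a b, G.Adj a b := by
    obtain ⟨v⟩ := h; obtain ⟨u, hu⟩ := hiso v; exact ⟨v, u, hu⟩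
  have key : ∀ u v : V, G.Adj u v →
      ∃ g : G ≃g G, (g a = u ∧ g b = v) ∨ (g a = v ∧ g b = u) := by
    intro u v huv
    obtain ⟨g, hg⟩ := hET _ (G.mem_edgeSet.2 hab) _ (G.mem_edgeSet.2 huv)
    rw [Sym2.map_pair_eq, Sym2.eq_iff] at hg
    exact ⟨g, hg⟩
  have hnab : ∀ g : G ≃g G, g a ≠ b := by
    intro g0 hg0
    apply hnVT
    have all_sa : ∀ u : V, ∃ g : G ≃g G, g a = u := by
      intro u
      obtain ⟨w, hw⟩ := hiso u
      obtain ⟨g, hg | hg⟩ := key u w hw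
      · exact ⟨g, hg.1⟩
      · exact ⟨g0.trans g, by simp [RelIso.trans_apply, hg0, hg.2]⟩
    intro u v
    obtain ⟨gu, hgu⟩ := all_sa u
    obtain ⟨gv, hgv⟩ := all_sa v
    refine ⟨gu.symm.trans gv, ?_⟩
    rw [RelIso.trans_apply, ← hgu, RelIso.symm_apply_apply, hgv]
  refine ⟨{u | ∃ g : G ≃g G, g a = u}, fun u v huv => ?_⟩
  obtain ⟨g, hg | hg⟩ := key u v huv
  · constructor
    · rintro - ⟨g', hg'⟩
      refine hnab (g'.trans g.symm) ?_
      rw [RelIso.trans_apply, hg', ← hg.2, RelIso.symm_apply_apply]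
    · exact fun _ => ⟨g, hg.1⟩
  · constructor
    · rintro ⟨g', hg'⟩
      exact absurd (by rw [RelIso.trans_apply, hg', ← hg.2, RelIso.symm_apply_apply] :
        (g'.trans g.symm) a = b) (hnab _)
    · intro hv
      exact absurd ⟨g, hg.1⟩ hv
end

section
/- If Λ is a dart-transitive tetravalent graph, then SDD(Λ) is edge-transitive. -/
/-- The subdivided double `SDD(Λ)`. -/
def SDD {V : Type*} (Λ : SimpleGraph V) : SimpleGraph (Λ.edgeSet ⊕ V × ZMod 2) :=
  SimpleGraph.fromRel (fun x y =>
    match x, y with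
    | Sum.inl e, Sum.inr (v, _) => v ∈ (e : Sym2 V)
    | _, _ => False)

lemma SDD_adj_iff {V : Type*} (Λ : SimpleGraph V) (x y : Λ.edgeSet ⊕ V × ZMod 2) :
    (SDD Λ).Adj x y ↔
      (∃ e v i, x = Sum.inl e ∧ y = Sum.inr (v, i) ∧ v ∈ (e : Sym2 V)) ∨
      (∃ e v i, y = Sum.inl e ∧ x = Sum.inr (v, i) ∧ v ∈ (e : Sym2 V)) := by
  rw [SDD, SimpleGraph.fromRel_adj]
  constructor
  · rintro ⟨hne, h | h⟩
    · rcases x with e | ⟨v, i⟩ <;> rcases y with f | ⟨w, j⟩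
      · exact absurd h not_false
      · exact Or.inl ⟨e, w, j, rfl, rfl, h⟩
      · exact absurd h not_false
      · exact absurd h not_false
    · rcases x with e | ⟨v, i⟩ <;> rcases y with f | ⟨w, j⟩
      · exact absurd h not_false
      · exact absurd h not_false
      · exact Or.inr ⟨f, v, i, rfl, rfl, h⟩
      · exact absurd h not_false
  · rintro (⟨e, v, i, rfl, rfl, h⟩ | ⟨e, v, i, rfl, rfl, h⟩)
    · exact ⟨by simp, Or.inl h⟩
    · exact ⟨by simp, Or.inr h⟩

/-- Automorphism of `SDD Λ` from an automorphism of `Λ` and a shift of the `ZMod 2` label. -/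
def sddIso {V : Type*} (Λ : SimpleGraph V) (g : Λ ≃g Λ) (c : ZMod 2) : SDD Λ ≃g SDD Λ where
  toEquiv := Equiv.sumCongr g.mapEdgeSet (Equiv.prodCongr g.toEquiv (Equiv.addRight c))
  map_rel_iff' := by
    intro x y
    have hmem : ∀ (v : V) (e : Sym2 V), g v ∈ Sym2.map g e ↔ v ∈ e := by
      intro v e
      rw [Sym2.mem_map]
      constructor
      · rintro ⟨a, ha, h⟩
        rwa [g.toEquiv.injective h] at ha
      · exact fun h => ⟨v, h, rfl⟩
    rcases x with e | ⟨v, i⟩ <;> rcases y with f | ⟨w, j⟩ <;>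
      simp only [Equiv.sumCongr_apply, Sum.map_inl, Sum.map_inr, Equiv.prodCongr_apply,
        Prod.map, SDD_adj_iff] <;>
      constructor
    · rintro (⟨a, b, k, h1, h2, _⟩ | ⟨a, b, k, h1, h2, _⟩) <;> simp_all
    · rintro (⟨a, b, k, h1, h2, _⟩ | ⟨a, b, k, h1, h2, _⟩) <;> simp_all
    · rintro (⟨a, b, k, h1, h2, h3⟩ | ⟨a, b, k, h1, h2, _⟩)
      · cases h1; cases h2
        refine Or.inl ⟨e, w, j, rfl, rfl, ?_⟩
        have : (↑(g.mapEdgeSet e) : Sym2 V) = Sym2.map g ↑e := rfl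
        rw [this] at h3
        exact (hmem w ↑e).mp h3
      · cases h1
    · rintro (⟨a, b, k, h1, h2, h3⟩ | ⟨a, b, k, h1, h2, _⟩)
      · cases h1; cases h2
        refine Or.inl ⟨g.mapEdgeSet e, g w, j + c, rfl, rfl, ?_⟩
        exact (hmem w ↑e).mpr h3
      · cases h1
    · rintro (⟨a, b, k, h1, h2, _⟩ | ⟨a, b, k, h1, h2, h3⟩)
      · cases h2
      · cases h1; cases h2
        refine Or.inr ⟨f, v, i, rfl, rfl, ?_⟩
        have : (↑(g.mapEdgeSet f) : Sym2 V) = Sym2.map g ↑f := rfl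
        rw [this] at h3
        exact (hmem v ↑f).mp h3
    · rintro (⟨a, b, k, h1, h2, _⟩ | ⟨a, b, k, h1, h2, h3⟩)
      · cases h2
      · cases h1; cases h2
        refine Or.inr ⟨g.mapEdgeSet f, g v, i + c, rfl, rfl, ?_⟩
        exact (hmem v ↑f).mpr h3
    · rintro (⟨a, b, k, h1, h2, _⟩ | ⟨a, b, k, h1, h2, _⟩) <;> simp_all
    · rintro (⟨a, b, k, h1, h2, _⟩ | ⟨a, b, k, h1, h2, _⟩) <;> simp_all

lemma SDD_edge_form {V : Type*} (Λ : SimpleGraph V) (e' : Sym2 (Λ.edgeSet ⊕ V × ZMod 2))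
    (h : e' ∈ (SDD Λ).edgeSet) :
    ∃ (e : Λ.edgeSet) (v : V) (i : ZMod 2),
      e' = s(Sum.inl e, Sum.inr (v, i)) ∧ v ∈ (e : Sym2 V) := by
  induction e' using Sym2.ind with
  | _ x y =>
    rw [SimpleGraph.mem_edgeSet, SDD_adj_iff] at h
    rcases h with ⟨e, v, i, rfl, rfl, hv⟩ | ⟨e, v, i, rfl, rfl, hv⟩
    · exact ⟨e, v, i, rfl, hv⟩
    · exact ⟨e, v, i, Sym2.eq_swap, hv⟩

/-- If `Λ` is a dart-transitive tetravalent graph, then `SDD(Λ)` is edge-transitive. -/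
theorem SDD_edgeTransitive {V : Type*} [Fintype V] (Λ : SimpleGraph V)
    (hreg : ∀ v : V, (Λ.neighborSet v).ncard = 4)
    (hDT : ∀ a b c d : V, Λ.Adj a b → Λ.Adj c d → ∃ g : Λ ≃g Λ, g a = c ∧ g b = d) :
    ∀ e ∈ (SDD Λ).edgeSet, ∀ f ∈ (SDD Λ).edgeSet,
      ∃ g : SDD Λ ≃g SDD Λ, Sym2.map g e = f := by
  intro e' he' f' hf'
  obtain ⟨e, v, i, rfl, hv⟩ := SDD_edge_form Λ e' he'
  obtain ⟨f, w, j, rfl, hw⟩ := SDD_edge_form Λ f' hf'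
  -- write e = s(v, v'), f = s(w, w')
  obtain ⟨e, he⟩ := e
  obtain ⟨f, hf⟩ := f
  have hespec := Sym2.other_spec hv
  have hfspec := Sym2.other_spec hw
  have hadj_e : Λ.Adj v (Sym2.Mem.other hv) := by
    rw [← SimpleGraph.mem_edgeSet, hespec]; exact he
  have hadj_f : Λ.Adj w (Sym2.Mem.other hw) := by
    rw [← SimpleGraph.mem_edgeSet, hfspec]; exact hf
  obtain ⟨g, hg1, hg2⟩ := hDT _ _ _ _ hadj_e hadj_f
  refine ⟨sddIso Λ g (j - i), ?_⟩
  have hespec' : s(v, Sym2.Mem.other hv) = e := hespec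
  have hfspec' : s(w, Sym2.Mem.other hw) = f := hfspec
  have hge : Sym2.map g e = f := by
    rw [← hespec', ← hfspec', Sym2.map_pair_eq, hg1, hg2]
  have h1 : (sddIso Λ g (j - i)) (Sum.inl ⟨e, he⟩) = Sum.inl (⟨f, hf⟩ : Λ.edgeSet) := by
    show Sum.inl (g.mapEdgeSet ⟨e, he⟩) = _
    congr 1
    exact Subtype.ext hge
  have h2 : (sddIso Λ g (j - i)) (Sum.inr (v, i)) = Sum.inr (w, j) := by
    show Sum.inr (g v, i + (j - i)) = _
    rw [hg1]
    congr 1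
    ring_nf
  rw [Sym2.map_pair_eq, h1, h2]
end

section
/- For n > k ≥ 1, the automorphisms σ_0, …, σ_{n−1} of PX(n,k), where σ_b swaps (b−i, x) with (b−i, x^i) for i = 1,…,k (x^i being x with the i-th bit flipped) and fixes all other vertices, pairwise commute and generate an elementary abelian 2-group of order 2^n. -/
/-- The Praeger–Xu graph `PX(n,k)`. -/
def PXGraph (n k : ℕ) : SimpleGraph (ZMod n × (Fin k → Bool)) :=
  SimpleGraph.fromRel (fun u v =>
    v.1 = u.1 + 1 ∧ ∀ (j : ℕ) (h : j + 1 < k),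
      v.2 ⟨j, Nat.lt_of_succ_lt h⟩ = u.2 ⟨j + 1, h⟩)

namespace PXaux

variable (n k : ℕ)

/-- the permutation xoring bit `i` with `s (v.1 + i + 1)`. -/
def permP (s : ZMod n → Bool) : Equiv.Perm (ZMod n × (Fin k → Bool)) where
  toFun v := (v.1, fun i => xor (s (v.1 + (((i : ℕ) + 1 : ℕ) : ZMod n))) (v.2 i))
  invFun v := (v.1, fun i => xor (s (v.1 + (((i : ℕ) + 1 : ℕ) : ZMod n))) (v.2 i))
  left_inv v := by
    refine Prod.ext rfl ?_
    funext i
    simp [← Bool.xor_assoc]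
  right_inv v := by
    refine Prod.ext rfl ?_
    funext i
    simp [← Bool.xor_assoc]

variable {n k}

lemma permP_snd (s : ZMod n → Bool) (v : ZMod n × (Fin k → Bool)) (i : Fin k) :
    (permP n k s v).2 i = xor (s (v.1 + (((i : ℕ) + 1 : ℕ) : ZMod n))) (v.2 i) := rfl

@[simp] lemma permP_invol (s : ZMod n → Bool) (v : ZMod n × (Fin k → Bool)) :
    permP n k s (permP n k s v) = v := (permP n k s).left_inv v

lemma permP_comp (s t : ZMod n → Bool) (v : ZMod n × (Fin k → Bool)) :
    permP n k s (permP n k t v) = permP n k (fun c => xor (s c) (t c)) v := by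
  refine Prod.ext rfl ?_
  funext i
  simp [permP, Bool.xor_assoc]

lemma permP_zero : permP n k (fun _ => false) = 1 := by
  refine Equiv.ext fun v => Prod.ext rfl ?_
  funext i
  simp [permP]

lemma permP_mul (s t : ZMod n → Bool) :
    permP n k s * permP n k t = permP n k (fun c => xor (s c) (t c)) :=
  Equiv.ext fun v => permP_comp s t v

lemma permP_inv (s : ZMod n → Bool) : (permP n k s)⁻¹ = permP n k s :=
  Equiv.ext fun v => rfl

lemma permP_rel (s : ZMod n → Bool) (u v : ZMod n × (Fin k → Bool))
    (h : v.1 = u.1 + 1 ∧ ∀ (j : ℕ) (h : j + 1 < k),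
      v.2 ⟨j, Nat.lt_of_succ_lt h⟩ = u.2 ⟨j + 1, h⟩) :
    (permP n k s v).1 = (permP n k s u).1 + 1 ∧ ∀ (j : ℕ) (h : j + 1 < k),
      (permP n k s v).2 ⟨j, Nat.lt_of_succ_lt h⟩ = (permP n k s u).2 ⟨j + 1, h⟩ := by
  obtain ⟨h1, h2⟩ := h
  refine ⟨h1, fun j hj => ?_⟩
  rw [permP_snd, permP_snd, h2 j hj, h1]
  congr 2
  push_cast
  ring

/-- `permP s` as a graph automorphism. -/
def sigmaP (s : ZMod n → Bool) : PXGraph n k ≃g PXGraph n k where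
  toEquiv := permP n k s
  map_rel_iff' := by
    intro u v
    simp only [PXGraph, SimpleGraph.fromRel_adj]
    constructor
    · rintro ⟨hne, h⟩
      refine ⟨fun he => hne (by rw [he]), ?_⟩
      rcases h with h | h
      · exact Or.inl (by have := permP_rel s _ _ h; simpa using this)
      · exact Or.inr (by have := permP_rel s _ _ h; simpa using this)
    · rintro ⟨hne, h⟩
      refine ⟨fun he => hne ((permP n k s).injective he), ?_⟩
      rcases h with h | h
      · exact Or.inl (permP_rel s u v h)
      · exact Or.inr (permP_rel s v u h)

lemma sigmaP_apply (s : ZMod n → Bool) (v : ZMod n × (Fin k → Bool)) :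
    (sigmaP s : PXGraph n k ≃g PXGraph n k) v = permP n k s v := rfl

lemma permP_injective (hk : 1 ≤ k) : Function.Injective (permP n k) := by
  intro s t h
  funext c
  have := congrArg (fun g : Equiv.Perm (ZMod n × (Fin k → Bool)) =>
    (g ((c - 1, fun _ => false) : ZMod n × (Fin k → Bool))).2 ⟨0, hk⟩) h
  simpa [permP_snd, sub_add_cancel] using this

end PXaux

open PXaux in
/-- For `n > k ≥ 1`, the local automorphisms `σ_b` of `PX(n,k)` (where `σ_b` flips the
`i`-th bit of the string coordinate of vertices in position `b − i`, for `i = 1,…,k`)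
pairwise commute and generate an elementary abelian 2-group of order `2^n`. -/
theorem PX_sigma_automorphisms (n k : ℕ) (hk : 1 ≤ k) (hnk : k < n) :
    ∃ σ : ZMod n → (PXGraph n k ≃g PXGraph n k),
      (∀ (b : ZMod n) (v : ZMod n × (Fin k → Bool)),
        σ b v = (v.1, fun i : Fin k =>
          if v.1 = b - (((i : ℕ) + 1 : ℕ) : ZMod n) then !(v.2 i) else v.2 i)) ∧
      (∀ (b c : ZMod n) (v : ZMod n × (Fin k → Bool)), σ b (σ c v) = σ c (σ b v)) ∧
      (∀ g ∈ Subgroup.closure (Set.range fun b : ZMod n => (σ b).toEquiv), g * g = 1) ∧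
      Nat.card
        (Subgroup.closure (Set.range fun b : ZMod n => (σ b).toEquiv)) = 2 ^ n := by
  haveI : NeZero n := ⟨by omega⟩
  refine ⟨fun b => sigmaP (fun c => decide (c = b)), ?_, ?_, ?_, ?_⟩
  · intro b v
    refine Prod.ext rfl ?_
    funext i
    show xor (decide (v.1 + (((i : ℕ) + 1 : ℕ) : ZMod n) = b)) (v.2 i)
        = if v.1 = b - (((i : ℕ) + 1 : ℕ) : ZMod n) then !(v.2 i) else v.2 i
    simp only [eq_sub_iff_add_eq]
    by_cases h : v.1 + (((i : ℕ) + 1 : ℕ) : ZMod n) = b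
    · rw [if_pos h, decide_eq_true h, Bool.true_xor]
    · rw [if_neg h, decide_eq_false h, Bool.false_xor]
  · intro b c v
    rw [sigmaP_apply, sigmaP_apply, sigmaP_apply, sigmaP_apply, permP_comp, permP_comp]
    have hc : (fun d => xor (decide (d = b)) (decide (d = c)))
        = (fun d => xor (decide (d = c)) (decide (d = b))) :=
      funext fun d => Bool.xor_comm _ _
    rw [hc]
  · -- every element of the closure is in the range of permP; squares are 1
    have hsub : ∀ g ∈ Subgroup.closure (Set.range fun b : ZMod n =>
        (sigmaP (fun c => decide (c = b)) : PXGraph n k ≃g PXGraph n k).toEquiv),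
        g ∈ Set.range (permP n k) := by
      intro g hg
      induction hg using Subgroup.closure_induction with
      | mem x hx => obtain ⟨b, rfl⟩ := hx; exact ⟨fun c => decide (c = b), rfl⟩
      | one => exact ⟨fun _ => false, permP_zero⟩
      | mul x y _ _ hx hy =>
          obtain ⟨s, rfl⟩ := hx; obtain ⟨t, rfl⟩ := hy
          exact ⟨_, (permP_mul s t).symm⟩
      | inv x _ hx => obtain ⟨s, rfl⟩ := hx; exact ⟨s, (permP_inv s).symm⟩
    intro g hg
    obtain ⟨s, rfl⟩ := hsub g hg
    rw [permP_mul]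
    rw [show (fun c => xor (s c) (s c)) = fun _ => false by funext c; simp]
    exact permP_zero
  · have hsub : ∀ g ∈ Subgroup.closure (Set.range fun b : ZMod n =>
        (sigmaP (fun c => decide (c = b)) : PXGraph n k ≃g PXGraph n k).toEquiv),
        g ∈ Set.range (permP n k) := by
      intro g hg
      induction hg using Subgroup.closure_induction with
      | mem x hx => obtain ⟨b, rfl⟩ := hx; exact ⟨fun c => decide (c = b), rfl⟩
      | one => exact ⟨fun _ => false, permP_zero⟩
      | mul x y _ _ hx hy =>
          obtain ⟨s, rfl⟩ := hx; obtain ⟨t, rfl⟩ := hy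
          exact ⟨_, (permP_mul s t).symm⟩
      | inv x _ hx => obtain ⟨s, rfl⟩ := hx; exact ⟨s, (permP_inv s).symm⟩
    have hfin : ∀ t : Finset (ZMod n),
        permP n k (fun c => decide (c ∈ t)) ∈ Subgroup.closure
          (Set.range fun b : ZMod n =>
            (sigmaP (fun c => decide (c = b)) : PXGraph n k ≃g PXGraph n k).toEquiv) := by
      intro t
      induction t using Finset.induction_on with
      | empty =>
          rw [show (fun c : ZMod n => decide (c ∈ (∅ : Finset (ZMod n)))) = fun _ => false
            by funext c; simp]
          rw [permP_zero]; exact Subgroup.one_mem _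
      | @insert a t ha ih =>
          have : permP n k (fun c => decide (c ∈ insert a t)) =
              permP n k (fun c => decide (c = a)) * permP n k (fun c => decide (c ∈ t)) := by
            rw [permP_mul]
            congr 1
            funext c
            by_cases h1 : c = a
            · subst h1; simp [ha]
            · simp [h1]
          rw [this]
          exact Subgroup.mul_mem _ (Subgroup.subset_closure ⟨a, rfl⟩) ih
    have hset : (Subgroup.closure (Set.range fun b : ZMod n =>
        (sigmaP (fun c => decide (c = b)) : PXGraph n k ≃g PXGraph n k).toEquiv) :
        Set (Equiv.Perm (ZMod n × (Fin k → Bool)))) = Set.range (permP n k) := by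
      apply Set.Subset.antisymm
      · intro g hg; exact hsub g hg
      · rintro g ⟨s, rfl⟩
        have : s = fun c => decide (c ∈ Finset.univ.filter (fun c => s c)) := by
          funext c
          cases h : s c <;> simp [h]
        rw [this]
        exact hfin _
    rw [← SetLike.coe_sort_coe, hset,
      Nat.card_range_of_injective (permP_injective hk), Nat.card_eq_fintype_card,
      Fintype.card_fun]
    simp [ZMod.card]
end

section
/- For n ≥ 5 not divisible by 3: if n ≡ 1 (mod 3) then the depleted wreath graph DW(n,3) is isomorphic to the circulant C_{3n}(1, n+1), and if n ≡ 2 (mod 3) then DW(n,3) is isomorphic to C_{3n}(1, n−1). -/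
/-- The depleted wreath graph `DW(n,3)` on `ZMod n × ZMod 3`: `(i,r)` is adjacent to
`(i+1,s)` for all `s ≠ r`. -/
def depletedWreath (n : ℕ) : SimpleGraph (ZMod n × ZMod 3) :=
  SimpleGraph.fromRel (fun u v => v.1 = u.1 + 1 ∧ v.2 ≠ u.2)

/-- Key lemma: if under the CRT isomorphism `ZMod (3n) ≃+* ZMod 3 × ZMod n` the element `a`
corresponds to `(2,1)` or `(1,-1)`, then `DW(n,3) ≅ C_{3n}(1,a)`. -/
lemma depletedWreath_iso_circulant_key (n : ℕ) (hcop : Nat.Coprime 3 n) (a : ZMod (3*n))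
    (ha : (ZMod.chineseRemainder hcop) a = (2,1) ∨ (ZMod.chineseRemainder hcop) a = (1,-1)) :
    Nonempty (depletedWreath n ≃g circGraph (3*n) a) := by
  set e := ZMod.chineseRemainder hcop with he
  have hsymm : ∀ (p q : ZMod 3 × ZMod n) (c : ZMod (3*n)),
      (e.symm p = e.symm q + c ↔ p = q + e c) := by
    intro p q c
    rw [show (e.symm q + c : ZMod (3*n)) = e.symm (q + e c) by
      rw [map_add, RingEquiv.symm_apply_apply]]
    exact e.symm.injective.eq_iff
  have hne : ∀ (p q : ZMod 3 × ZMod n), (e.symm p ≠ e.symm q ↔ p ≠ q) :=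
    fun p q => e.symm.injective.ne_iff
  have he1 : e 1 = ((1 : ZMod 3), (1 : ZMod n)) := map_one e
  refine ⟨{ toEquiv := (Equiv.prodComm _ _).trans e.symm.toEquiv, map_rel_iff' := ?_ }⟩
  rintro ⟨i, r⟩ ⟨j, s⟩
  simp only [Equiv.trans_apply, Equiv.prodComm_apply, Prod.swap_prod_mk, depletedWreath,
    circGraph, SimpleGraph.fromRel_adj, ne_eq]
  rw [show ⇑(e.symm.toEquiv) = ⇑e.symm from rfl]
  simp only [hsymm, hne, he1]
  have hneg : ∀ x y : ZMod n, y = x + -1 ↔ x = y + 1 := by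
    intro x y; constructor <;> intro h <;> subst h <;> ring
  have hz1 : ∀ r s : ZMod 3, (¬ s = r) ↔ (s = r + 1 ∨ s = r + 2) := by decide
  have hz1' : ∀ r s : ZMod 3, (¬ s = r) ↔ (s = r + 1 ∨ r = s + 1) := by decide
  rcases ha with ha | ha <;> rw [ha]
  · simp only [Prod.mk_add_mk, Prod.mk.injEq, Prod.ext_iff, ne_eq, hz1]
    tauto
  · simp only [Prod.mk_add_mk, Prod.mk.injEq, Prod.ext_iff, ne_eq, hneg, hz1']
    tauto

/-- For `n ≥ 5` not divisible by 3: if `n ≡ 1 (mod 3)` then `DW(n,3) ≅ C_{3n}(1,n+1)`,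
and if `n ≡ 2 (mod 3)` then `DW(n,3) ≅ C_{3n}(1,n−1)`. -/
theorem depletedWreath_iso_circulant (n : ℕ) (hn : 5 ≤ n) (h3 : ¬ (3 ∣ n)) :
    (n % 3 = 1 → Nonempty (depletedWreath n ≃g circGraph (3 * n) ((n : ZMod (3 * n)) + 1))) ∧
    (n % 3 = 2 → Nonempty (depletedWreath n ≃g circGraph (3 * n) ((n : ZMod (3 * n)) - 1))) := by
  have hcop : Nat.Coprime 3 n := (Nat.prime_three.coprime_iff_not_dvd).mpr h3
  have hcast : (ZMod.chineseRemainder hcop) ((n : ZMod (3*n))) =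
      ((n : ZMod 3), (n : ZMod n)) := by
    rw [map_natCast]
    exact Prod.ext (by simp) (by simp)
  have hn0 : (n : ZMod n) = 0 := ZMod.natCast_self n
  constructor
  · intro h1
    have h3' : (n : ZMod 3) = 1 := by
      rw [← ZMod.natCast_mod, h1]; rfl
    refine depletedWreath_iso_circulant_key n hcop _ (Or.inl ?_)
    rw [map_add, hcast, map_one, h3', hn0,
      show (1 : ZMod 3 × ZMod n) = ((1 : ZMod 3), (1 : ZMod n)) from rfl, Prod.mk_add_mk]
    exact Prod.ext (show (1:ZMod 3)+1 = (2:ZMod 3) by decide) (by simp)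
  · intro h2
    have h3' : (n : ZMod 3) = 2 := by
      rw [← ZMod.natCast_mod, h2]; rfl
    refine depletedWreath_iso_circulant_key n hcop _ (Or.inr ?_)
    rw [sub_eq_add_neg, map_add, hcast, map_neg, map_one, h3', hn0,
      show (-1 : ZMod 3 × ZMod n) = ((-1 : ZMod 3), (-1 : ZMod n)) from rfl, Prod.mk_add_mk]
    exact Prod.ext (show (2:ZMod 3)+(-1) = (1:ZMod 3) by decide) (by simp)
end
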